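/- Let G = (V,E) be a finite simple graph. For positive integers k, the quantity (−1)^{|V|} χ_G(−k) is weakly increasing in k, and is strictly positive for all k ≥ 1 whenever V is nonempty. -/

import Mathlib

open SimpleGraph Polynomial

/-- Number of proper colorings of `G` with `k` colors. -/
noncomputable def properColoringCount {V : Type*} (G : SimpleGraph V) (k : ℕ) : ℕ :=
  Nat.card {f : V → Fin k // ∀ u v, G.Adj u v → f u ≠ f v}

/-- `P` is the chromatic polynomial of `G`. -/
def IsChromaticPoly {V : Type*} (G : SimpleGraph V) (P : Polynomial ℤ) : Prop :=
  ∀ k : ℕ, P.eval (k : ℤ) = properColoringCount G k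

/-- Contract the edge `uv` (after deleting it): identify `v` with `u`. -/
def ContractG {V : Type*} (G : SimpleGraph V) (u v : V) : SimpleGraph {x : V // x ≠ v} where
  Adj a b := (G.deleteEdges {s(u,v)}).Adj a.1 b.1 ∨
    ((a : V) = u ∧ (G.deleteEdges {s(u,v)}).Adj v b.1) ∨
    ((b : V) = u ∧ (G.deleteEdges {s(u,v)}).Adj a.1 v)
  symm := by
    constructor
    rintro a b (h | ⟨h1, h2⟩ | ⟨h1, h2⟩)
    · exact Or.inl h.symm
    · exact Or.inr (Or.inr ⟨h1, h2.symm⟩)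
    · exact Or.inr (Or.inl ⟨h1, h2.symm⟩)
  loopless := by
    constructor
    rintro a (h | ⟨h1, h2⟩ | ⟨h1, h2⟩)
    · exact (G.deleteEdges {s(u,v)}).irrefl h
    · rw [deleteEdges_adj] at h2
      exact h2.2 (by simp [h1, Sym2.eq_swap])
    · rw [deleteEdges_adj] at h2
      exact h2.2 (by simp [h1])

lemma count_split {V : Type*} [Fintype V] [DecidableEq V] (G : SimpleGraph V) {u v : V}
    (huv : G.Adj u v) (k : ℕ) :
    properColoringCount (G.deleteEdges {s(u,v)}) k =
      properColoringCount G k + properColoringCount (ContractG G u v) k := by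
  classical
  set H := G.deleteEdges {s(u,v)} with hH
  have hne : u ≠ v := huv.ne
  have hGadj : ∀ a b : V, G.Adj a b ↔ H.Adj a b ∨ (a = u ∧ b = v) ∨ (a = v ∧ b = u) := by
    intro a b
    rw [hH, deleteEdges_adj]
    constructor
    · intro h
      by_cases hs : s(a,b) = s(u,v)
      · rw [Sym2.eq_iff] at hs
        exact Or.inr (by tauto)
      · exact Or.inl ⟨h, by simpa using hs⟩
    · rintro (⟨h, _⟩ | ⟨rfl, rfl⟩ | ⟨rfl, rfl⟩)
      · exact h
      · exact huv
      · exact huv.symm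
  let e : {f : V → Fin k // ∀ a b, H.Adj a b → f a ≠ f b} ≃
      {f : V → Fin k // ∀ a b, G.Adj a b → f a ≠ f b} ⊕
      {g : {x : V // x ≠ v} → Fin k // ∀ a b, (ContractG G u v).Adj a b → g a ≠ g b} :=
  { toFun := fun f =>
      if h : f.1 u = f.1 v then
        Sum.inr ⟨fun a => f.1 a.1, by
          rintro a b (h' | ⟨h1, h2⟩ | ⟨h1, h2⟩) <;> show f.1 a.1 ≠ f.1 b.1
          · exact f.2 a.1 b.1 h'
          · simpa [h1, h] using f.2 v b.1 h2
          · intro hc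
            exact f.2 a.1 v h2 (by rw [hc, h1, h])⟩
      else
        Sum.inl ⟨f.1, by
          intro a b hab
          rcases (hGadj a b).1 hab with h' | ⟨rfl, rfl⟩ | ⟨rfl, rfl⟩
          · exact f.2 a b h'
          · exact h
          · exact fun hh => h hh.symm⟩,
    invFun := Sum.elim
      (fun f => ⟨f.1, fun a b hab => f.2 a b ((hGadj a b).2 (Or.inl hab))⟩)
      (fun g => ⟨fun x => if h : x = v then g.1 ⟨u, hne⟩ else g.1 ⟨x, h⟩, by
        intro a b hab
        have hab' : a ≠ b := (H.ne_of_adj hab)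
        show (if h : a = v then g.1 ⟨u, hne⟩ else g.1 ⟨a, h⟩) ≠
          (if h : b = v then g.1 ⟨u, hne⟩ else g.1 ⟨b, h⟩)
        by_cases ha : a = v
        · have hb : b ≠ v := fun hh => hab' (hh ▸ ha ▸ rfl)
          rw [dif_pos ha, dif_neg hb]
          have hab2 : H.Adj v b := by rwa [ha] at hab
          exact g.2 ⟨u, hne⟩ ⟨b, hb⟩ (Or.inr (Or.inl ⟨rfl, hab2⟩))
        · by_cases hb : b = v
          · rw [dif_neg ha, dif_pos hb]
            have hab2 : H.Adj a v := by rwa [hb] at hab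
            exact g.2 ⟨a, ha⟩ ⟨u, hne⟩ (Or.inr (Or.inr ⟨rfl, hab2⟩))
          · rw [dif_neg ha, dif_neg hb]
            exact g.2 ⟨a, ha⟩ ⟨b, hb⟩ (Or.inl hab)⟩),
    left_inv := by
      intro f
      by_cases h : f.1 u = f.1 v
      · dsimp only
        rw [dif_pos h]
        dsimp only [Sum.elim_inr]
        apply Subtype.ext
        funext x
        show (if hx : x = v then f.1 u else f.1 x) = f.1 x
        by_cases hx : x = v
        · rw [dif_pos hx, hx, h]
        · rw [dif_neg hx]
      · dsimp only
        rw [dif_neg h]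
        rfl
    right_inv := by
      rintro (f | g)
      · have h : f.1 u ≠ f.1 v := f.2 u v huv
        dsimp only [Sum.elim_inl]
        rw [dif_neg h]
      · have hcond : (if h : u = v then g.1 ⟨u, hne⟩ else g.1 ⟨u, h⟩)
            = (if h : v = v then g.1 ⟨u, hne⟩ else g.1 ⟨v, h⟩) := by
          rw [dif_neg hne, dif_pos rfl]
        dsimp only [Sum.elim_inr]
        rw [dif_pos hcond]
        congr 1
        apply Subtype.ext
        funext a
        show (if h : (a:V) = v then g.1 ⟨u, hne⟩ else g.1 ⟨a.1, h⟩) = g.1 a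
        rw [dif_neg a.2] }
  have hfin1 : Finite {f : V → Fin k // ∀ a b, H.Adj a b → f a ≠ f b} := Subtype.finite
  unfold properColoringCount
  rw [Nat.card_congr e, Nat.card_sum]

lemma count_of_no_adj {V : Type*} [Fintype V] (G : SimpleGraph V)
    (h : ∀ a b, ¬ G.Adj a b) (k : ℕ) :
    properColoringCount G k = k ^ Fintype.card V := by
  unfold properColoringCount
  have e : {f : V → Fin k // ∀ u v, G.Adj u v → f u ≠ f v} ≃ (V → Fin k) :=
    Equiv.subtypeUnivEquiv (fun f a b hab => absurd hab (h a b))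
  rw [Nat.card_congr e, Nat.card_fun]
  simp [Nat.card_eq_fintype_card]

lemma key (n : ℕ) : ∀ (m : ℕ) (V : Type u) [Fintype V] (G : SimpleGraph V),
    Fintype.card V = n → G.edgeSet.ncard = m →
    ∃ Q : Polynomial ℤ, (∀ k : ℕ, Q.eval (k : ℤ) = properColoringCount G k) ∧
      Q.coeff n = 1 ∧ (∀ i, n < i → Q.coeff i = 0) ∧
      (∀ i, 0 ≤ (-1) ^ (n + i) * Q.coeff i) := by
  induction n using Nat.strong_induction_on with
  | _ n ihn =>
  intro m
  induction m using Nat.strong_induction_on with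
  | _ m ihm =>
  intro V _ G hn hm
  classical
  by_cases hE : ∃ a b, G.Adj a b
  · obtain ⟨u, v, huv⟩ := hE
    have hnpos : 0 < n := hn ▸ Fintype.card_pos_iff.mpr ⟨u⟩
    obtain ⟨n', rfl⟩ : ∃ n', n = n' + 1 := ⟨n - 1, (Nat.succ_pred_eq_of_pos hnpos).symm⟩
    have hmem : s(u,v) ∈ G.edgeSet := G.mem_edgeSet.mpr huv
    have hmpos : 0 < m := hm ▸ (Set.ncard_pos (Set.toFinite _)).mpr ⟨_, hmem⟩
    obtain ⟨m', rfl⟩ : ∃ m', m = m' + 1 := ⟨m - 1, (Nat.succ_pred_eq_of_pos hmpos).symm⟩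
    set H := G.deleteEdges {s(u,v)} with hH
    have hmH : H.edgeSet.ncard = m' := by
      rw [hH, edgeSet_deleteEdges, Set.ncard_diff_singleton_of_mem hmem, hm]
      omega
    obtain ⟨Q1, hQ1e, hQ1c, hQ1z, hQ1s⟩ :=
      ihm m' (Nat.lt_succ_self m') V H hn hmH
    have hcard' : Fintype.card {x : V // x ≠ v} = n' := by
      rw [Fintype.card_subtype_compl, Fintype.card_subtype_eq, hn]
      omega
    obtain ⟨Q2, hQ2e, hQ2c, hQ2z, hQ2s⟩ :=
      ihn n' (Nat.lt_succ_self n') ((ContractG G u v).edgeSet.ncard) {x : V // x ≠ v}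
        (ContractG G u v) hcard' rfl
    refine ⟨Q1 - Q2, ?_, ?_, ?_, ?_⟩
    · intro k
      have hsplit := count_split G huv k
      rw [eval_sub, hQ1e, hQ2e]
      rw [← hH] at hsplit
      rw [hsplit]
      push_cast
      ring
    · rw [coeff_sub, hQ1c, hQ2z _ (Nat.lt_succ_self n')]
      ring
    · intro i hi
      rw [coeff_sub, hQ1z i hi, hQ2z i (Nat.lt_of_succ_lt hi)]
      ring
    · intro i
      have h1 := hQ1s i
      have h2 := hQ2s i
      have hpow : (-1 : ℤ) ^ (n' + 1 + i) = -(-1) ^ (n' + i) := by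
        rw [show n' + 1 + i = (n' + i) + 1 by ring, pow_succ]
        ring
      rw [coeff_sub, hpow]
      rw [hpow] at h1
      linarith
  · push_neg at hE
    refine ⟨X ^ n, ?_, ?_, ?_, ?_⟩
    · intro k
      rw [count_of_no_adj G hE, hn]
      push_cast
      simp
    · simp [coeff_X_pow]
    · intro i hi
      simp [coeff_X_pow, Nat.ne_of_gt hi]
    · intro i
      rcases eq_or_ne i n with rfl | hne
      · simp only [coeff_X_pow, if_pos rfl, mul_one]
        rw [show i + i = 2 * i by ring, pow_mul]
        norm_num
      · simp [coeff_X_pow, hne.symm, if_neg hne]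

/-- `(-1)^|V| χ_G(-k)` is weakly increasingpositive for all `k ≥ 1` when `V` is nonempty. -/
theorem signed_chromatic_monotone_pos {V : Type*} [Fintype V] (G : SimpleGraph V)
    (P : Polynomial ℤ) (hP : IsChromaticPoly G P) :
    (∀ k₁ k₂ : ℕ, 1 ≤ k₁ → k₁ ≤ k₂ →
      (-1 : ℤ) ^ (Fintype.card V) * P.eval (-(k₁ : ℤ)) ≤
        (-1 : ℤ) ^ (Fintype.card V) * P.eval (-(k₂ : ℤ))) ∧
    (Nonempty V → ∀ k : ℕ, 1 ≤ k →
      0 < (-1 : ℤ) ^ (Fintype.card V) * P.eval (-(k : ℤ))) := by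
  classical
  set n := Fintype.card V with hn
  obtain ⟨Q, hQe, hQc, hQz, hQs⟩ := key n (G.edgeSet.ncard) V G hn.symm rfl
  have hPQ : P = Q := by
    apply Polynomial.eq_of_infinite_eval_eq
    apply Set.infinite_of_injective_forall_mem (f := fun k : ℕ => (k : ℤ))
      (hi := Nat.cast_injective)
    intro k
    simp only [Set.mem_setOf_eq]
    rw [hP k, hQe k]
  subst hPQ
  have hdeg : P.natDegree < n + 1 :=
    Nat.lt_succ_of_le (Polynomial.natDegree_le_iff_coeff_eq_zero.mpr (fun i hi => hQz i hi))
  have hkey : ∀ k : ℕ, (-1 : ℤ) ^ n * P.eval (-(k : ℤ)) =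
      ∑ i ∈ Finset.range (n + 1), ((-1 : ℤ) ^ (n + i) * P.coeff i) * (k : ℤ) ^ i := by
    intro k
    rw [Polynomial.eval_eq_sum_range' hdeg, Finset.mul_sum]
    refine Finset.sum_congr rfl fun i _ => ?_
    rw [neg_pow]
    ring
  constructor
  · intro k₁ k₂ hk1 hk12
    rw [hkey k₁, hkey k₂]
    refine Finset.sum_le_sum fun i _ => ?_
    exact mul_le_mul_of_nonneg_left
      (pow_le_pow_left₀ (by positivity) (by exact_mod_cast hk12) i) (hQs i)
  · intro hne k hk
    rw [hkey k]
    have hterm : ((-1 : ℤ) ^ (n + n) * P.coeff n) * (k : ℤ) ^ n = (k : ℤ) ^ n := by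
      rw [hQc, show n + n = 2 * n by ring, pow_mul]
      norm_num
    have hpos : (0 : ℤ) < ((-1 : ℤ) ^ (n + n) * P.coeff n) * (k : ℤ) ^ n := by
      rw [hterm]
      exact pow_pos (by exact_mod_cast hk) n
    refine lt_of_lt_of_le hpos ?_
    exact Finset.single_le_sum (f := fun i => ((-1 : ℤ) ^ (n + i) * P.coeff i) * (k : ℤ) ^ i)
      (fun i _ => mul_nonneg (hQs i) (by positivity)) (Finset.self_mem_range_succ n)
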